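/- arXiv:1811.01113 — 3 statements merged into one kernel-verified Lean document; each statement's English description precedes it below -/
import Mathlib

section
/- Let g : W → ℝᵖ be real analytic on a neighborhood W of 0 in ℝ × ℝⁿ, write g_t(x) = g(t,x), and suppose g_t(0) = 0 for all t. Suppose there exist C > 0, ε₀ > 0 and α > 0 such that ‖g₀(x)‖ ≥ C‖x‖^α for all ‖x‖ < ε₀. Let m = ⌊α⌋ + 1 and suppose that the difference (t,x) ↦ g_t(x) − g₀(x) can be written as Σ_{|β| = m} x^β H_β(t,x) for finitely many real analytic maps H_β : W → ℝᵖ, where β ranges over multi-indices of total degree m (i.e., each component of g_t − g₀ lies in the m-th power of the ideal generated by x₁, …, xₙ in the ring of analytic germs at 0 in ℝ × ℝⁿ). Then there exist δ > 0 and ε > 0 such that for all |t| < δ and all ‖x‖ < ε, g_t(x) = 0 implies x = 0. -/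
open Metric Set

lemma coord_abs_le_norm {n : ℕ} (x : EuclideanSpace ℝ (Fin n)) (i : Fin n) :
    |x i| ≤ ‖x‖ := by
  rw [EuclideanSpace.norm_eq, ← Real.sqrt_sq_eq_abs]
  apply Real.sqrt_le_sqrt
  have := Finset.single_le_sum (f := fun j => ‖x j‖ ^ 2)
    (fun j _ => sq_nonneg _) (Finset.mem_univ i)
  simpa [Real.norm_eq_abs, sq_abs] using this

/-- Let `g` be real analytic on a neighborhood `W` of `0` in `ℝ × ℝⁿ`,
with `g (t, 0) = 0`, and suppose `‖g (0, x)‖ ≥ C ‖x‖ ^ α` near `0` for some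
`C, ε₀, α > 0`.  If, with `m = ⌊α⌋ + 1`, the difference `g (t, x) - g (0, x)` can be
written as `∑_{|β| = m} x ^ β • H_β (t, x)` for finitely many real analytic maps `H_β`
indexed by multi-indices `β` of total degree `m`, then there exist `δ, ε > 0` such that
for `|t| < δ` and `‖x‖ < ε`, `g (t, x) = 0` implies `x = 0`. -/
theorem uniform_isolated_zero {n p : ℕ}
    (W : Set (ℝ × EuclideanSpace ℝ (Fin n))) (hWo : IsOpen W)
    (hW0 : ((0:ℝ), (0 : EuclideanSpace ℝ (Fin n))) ∈ W)
    (g : ℝ × EuclideanSpace ℝ (Fin n) → EuclideanSpace ℝ (Fin p))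
    (hg : AnalyticOnNhd ℝ g W)
    (hg0 : ∀ t : ℝ, (t, (0 : EuclideanSpace ℝ (Fin n))) ∈ W → g (t, 0) = 0)
    (C ε₀ α : ℝ) (hC : 0 < C) (hε₀ : 0 < ε₀) (hα : 0 < α)
    (hLoj : ∀ x : EuclideanSpace ℝ (Fin n), ‖x‖ < ε₀ → ((0:ℝ), x) ∈ W →
      C * ‖x‖ ^ α ≤ ‖g (0, x)‖)
    (S : Finset (Fin n → ℕ)) (hS : ∀ β ∈ S, ∑ i, β i = ⌊α⌋₊ + 1)
    (H : (Fin n → ℕ) → ℝ × EuclideanSpace ℝ (Fin n) → EuclideanSpace ℝ (Fin p))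
    (hH : ∀ β ∈ S, AnalyticOnNhd ℝ (H β) W)
    (hdiff : ∀ (t : ℝ) (x : EuclideanSpace ℝ (Fin n)), (t, x) ∈ W → ((0:ℝ), x) ∈ W →
      g (t, x) - g (0, x) = ∑ β ∈ S, (∏ i, x i ^ β i) • H β (t, x)) :
    ∃ δ > (0:ℝ), ∃ ε > (0:ℝ), ∀ (t : ℝ) (x : EuclideanSpace ℝ (Fin n)),
      |t| < δ → ‖x‖ < ε → g (t, x) = 0 → x = 0 := by
  -- ball inside W
  obtain ⟨r₀, hr₀, hball⟩ := Metric.isOpen_iff.mp hWo _ hW0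
  set m : ℕ := ⌊α⌋₊ + 1 with hm
  have hαm : α < (m : ℝ) := by
    have := Nat.lt_floor_add_one α
    push_cast [hm]; push_cast at this; linarith
  set e : ℝ := (m : ℝ) - α with he
  have he0 : 0 < e := by simp [he]; linarith
  -- bound the sum of norms of H β near 0
  set φ : ℝ × EuclideanSpace ℝ (Fin n) → ℝ := fun z => ∑ β ∈ S, ‖H β z‖ with hφdef
  have hφc : ContinuousAt φ (0, 0) :=
    tendsto_finset_sum _ fun β hβ => ((hH β hβ _ hW0).continuousAt).norm
  set M : ℝ := φ (0, 0) + 1 with hM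
  have hM0 : 0 < M := by
    have : 0 ≤ φ (0, 0) := Finset.sum_nonneg fun β _ => norm_nonneg _
    linarith
  obtain ⟨r₁, hr₁, hφb⟩ := Metric.continuousAt_iff.mp hφc 1 one_pos
  -- radius making M * ε ^ e < C
  set ε₂ : ℝ := (C / M) ^ e⁻¹ with hε₂def
  have hCM : 0 < C / M := div_pos hC hM0
  have hε₂ : 0 < ε₂ := Real.rpow_pos_of_pos hCM _
  set ε : ℝ := min (min ε₀ r₀) (min r₁ ε₂) with hεdef
  have hε : 0 < ε := lt_min (lt_min hε₀ hr₀) (lt_min hr₁ hε₂)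
  refine ⟨ε, hε, ε, hε, fun t x ht hx hgz => ?_⟩
  by_contra hx0
  have hxpos : 0 < ‖x‖ := norm_pos_iff.mpr hx0
  have hxε₀ : ‖x‖ < ε₀ := lt_of_lt_of_le hx (le_trans (min_le_left _ _) (min_le_left _ _))
  have hxr₀ : ‖x‖ < r₀ := lt_of_lt_of_le hx (le_trans (min_le_left _ _) (min_le_right _ _))
  have htr₀ : |t| < r₀ := lt_of_lt_of_le ht (le_trans (min_le_left _ _) (min_le_right _ _))
  have hxr₁ : ‖x‖ < r₁ := lt_of_lt_of_le hx (le_trans (min_le_right _ _) (min_le_left _ _))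
  have htr₁ : |t| < r₁ := lt_of_lt_of_le ht (le_trans (min_le_right _ _) (min_le_left _ _))
  have hxε₂ : ‖x‖ < ε₂ := lt_of_lt_of_le hx (le_trans (min_le_right _ _) (min_le_right _ _))
  have hmemW : (t, x) ∈ W := by
    apply hball
    rw [Metric.mem_ball, Prod.dist_eq]
    simp only [dist_zero_right, Real.norm_eq_abs]
    exact max_lt htr₀ hxr₀
  have hmem0 : ((0:ℝ), x) ∈ W := by
    apply hball
    rw [Metric.mem_ball, Prod.dist_eq]
    simp only [dist_zero_right, Real.norm_eq_abs]
    exact max_lt (by simpa using hr₀) hxr₀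
  -- bound φ (t, x) ≤ M
  have hφtx : φ (t, x) ≤ M := by
    have hd : dist (t, x) ((0:ℝ), (0:EuclideanSpace ℝ (Fin n))) < r₁ := by
      rw [Prod.dist_eq]
      simp only [dist_zero_right, Real.norm_eq_abs]
      exact max_lt htr₁ hxr₁
    have := hφb hd
    rw [Real.dist_eq] at this
    have := abs_lt.mp this
    linarith [this.1, this.2]
  -- the key norm bound
  have hx_coord : ∀ i : Fin n, |x i| ≤ ‖x‖ := coord_abs_le_norm x
  have hbound : ‖g (0, x)‖ ≤ M * ‖x‖ ^ m := by
    have hdeq := hdiff t x hmemW hmem0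
    rw [hgz, zero_sub] at hdeq
    have : ‖g (0, x)‖ = ‖∑ β ∈ S, (∏ i, x i ^ β i) • H β (t, x)‖ := by
      rw [← hdeq, norm_neg]
    rw [this]
    calc ‖∑ β ∈ S, (∏ i, x i ^ β i) • H β (t, x)‖
        ≤ ∑ β ∈ S, ‖(∏ i, x i ^ β i) • H β (t, x)‖ := norm_sum_le _ _
      _ ≤ ∑ β ∈ S, ‖x‖ ^ m * ‖H β (t, x)‖ := by
          apply Finset.sum_le_sum
          intro β hβ
          rw [norm_smul, Real.norm_eq_abs]
          apply mul_le_mul_of_nonneg_right _ (norm_nonneg _)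
          calc |∏ i, x i ^ β i| = ∏ i, |x i| ^ β i := by
                rw [Finset.abs_prod]; simp [abs_pow]
            _ ≤ ∏ i, ‖x‖ ^ β i := by
                apply Finset.prod_le_prod
                · intro i _; positivity
                · intro i _; exact pow_le_pow_left₀ (abs_nonneg _) (hx_coord i) _
            _ = ‖x‖ ^ m := by
                rw [Finset.prod_pow_eq_pow_sum, hS β hβ]
      _ = ‖x‖ ^ m * φ (t, x) := by rw [Finset.mul_sum]
      _ ≤ ‖x‖ ^ m * M := by
          apply mul_le_mul_of_nonneg_left hφtx (by positivity)
      _ = M * ‖x‖ ^ m := mul_comm _ _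
  -- Łojasiewicz lower bound
  have hlow := hLoj x hxε₀ hmem0
  -- derive contradiction
  have hsplit : ‖x‖ ^ m = ‖x‖ ^ α * ‖x‖ ^ e := by
    rw [← Real.rpow_natCast ‖x‖ m, ← Real.rpow_add hxpos]
    congr 1
    simp [he]
  have hxe : ‖x‖ ^ e < C / M := by
    calc ‖x‖ ^ e < ε₂ ^ e := Real.rpow_lt_rpow (norm_nonneg x) hxε₂ he0
      _ = C / M := Real.rpow_inv_rpow hCM.le (ne_of_gt he0)
  have hxα : 0 < ‖x‖ ^ α := Real.rpow_pos_of_pos hxpos α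
  have : M * ‖x‖ ^ m < C * ‖x‖ ^ α := by
    rw [hsplit]
    calc M * (‖x‖ ^ α * ‖x‖ ^ e) = (M * ‖x‖ ^ e) * ‖x‖ ^ α := by ring
      _ < C * ‖x‖ ^ α := by
          apply mul_lt_mul_of_pos_right _ hxα
          calc M * ‖x‖ ^ e < M * (C / M) := by
                exact mul_lt_mul_of_pos_left hxe hM0
            _ = C := by field_simp
  linarith
end

section
/- Let F(t,x) = (t, f_t(x)) be a real analytic family defined on a neighborhood of 0 in ℝ × ℝⁿ with values in ℝ × ℝᵖ, n ≤ p, with f_t(0) = 0 for all t, and suppose f₀ has isolated singularity at 0. Let A₀ be a real analytic matrix-valued map with f₀(x') − f₀(x) = A₀(x,x')·(x'−x), and suppose there exist C > 0, ε₁ > 0 and α > 0 such that ‖Δ̃f₀(x,x')‖ ≥ C‖(x,x')‖^α for all ‖(x,x')‖ < ε₁. Let k ≥ ⌊α⌋ + 2 and suppose that each component of (t,x) ↦ f_t(x) − f₀(x) can be written as Σ_{|β| = k} x^β H_β(t,x) with H_β real analytic (i.e., f_t − f₀ lies in the k-th power of the ideal generated by x₁,…,xₙ, with analytic coefficients in (t,x)).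 Then the family has uniform isolated singularity: there exist δ > 0 and ε > 0 such that for every |t| < δ, the map f_t is injective on the ball {‖x‖ < ε} and its derivative Df_t(x) is injective for every x with 0 < ‖x‖ < ε. -/
open Metric Set

/-- The sum of the absolute values of the `n × n` minors of a `p × n` real matrix
(one minor for each `n`-element subset of rows).  It is comparable (up to positive
constants) with the norm of the vector of all `n × n` minors `(D₁, …, D_r)`. -/
noncomputable def minorAbsSum (n p : ℕ) (M : Matrix (Fin p) (Fin n) ℝ) : ℝ :=
  ∑ s ∈ (Finset.powersetCard n (Finset.univ : Finset (Fin p))).attach,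
    |(M.submatrix
        (fun i => ((s.1.orderIsoOfFin ((Finset.mem_powersetCard.mp s.2).2)) i : Fin p))
        id).det|


lemma euclid_coord_le_norm {n : ℕ} (v : EuclideanSpace ℝ (Fin n)) (i : Fin n) :
    |v i| ≤ ‖v‖ := by
  rw [EuclideanSpace.norm_eq]
  rw [← Real.sqrt_sq_eq_abs]
  apply Real.sqrt_le_sqrt
  have : |v i| ^ 2 ≤ ∑ j, ‖v j‖ ^ 2 := by
    have := Finset.single_le_sum (f := fun j => ‖v j‖ ^ 2)
      (fun j _ => by positivity) (Finset.mem_univ i)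
    simpa using this
  simpa using this

lemma abs_det_le_col {m : ℕ} (A : Matrix (Fin m) (Fin m) ℝ) (b : Fin m → ℝ)
    (hb0 : ∀ j, 0 ≤ b j) (hb : ∀ i j, |A i j| ≤ b j) :
    |A.det| ≤ m.factorial * ∏ j, b j := by
  rw [Matrix.det_apply]
  calc |∑ σ : Equiv.Perm (Fin m), Equiv.Perm.sign σ • ∏ i, A (σ i) i|
      ≤ ∑ σ : Equiv.Perm (Fin m), |Equiv.Perm.sign σ • ∏ i, A (σ i) i| :=
        Finset.abs_sum_le_sum_abs _ _
    _ ≤ ∑ _σ : Equiv.Perm (Fin m), ∏ j, b j := ?_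
    _ = m.factorial * ∏ j, b j := by
        rw [Finset.sum_const, Finset.card_univ, Fintype.card_perm, Fintype.card_fin,
          nsmul_eq_mul]
  apply Finset.sum_le_sum
  intro σ _
  have h1 : |Equiv.Perm.sign σ • ∏ i, A (σ i) i| = |∏ i, A (σ i) i| := by
    rcases Int.units_eq_one_or (Equiv.Perm.sign σ) with h | h <;> simp [h]
  rw [h1, Finset.abs_prod]
  exact Finset.prod_le_prod (fun _ _ => abs_nonneg _) (fun i _ => hb _ _)

lemma abs_pow_sub_pow_le' (a b R : ℝ) (ha : |a| ≤ R) (hb : |b| ≤ R) (m : ℕ) :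
    |a ^ m - b ^ m| ≤ m * R ^ (m - 1) * |a - b| := by
  have hR : 0 ≤ R := le_trans (abs_nonneg a) ha
  rw [← geom_sum₂_mul, abs_mul]
  gcongr
  calc |∑ i ∈ Finset.range m, a ^ i * b ^ (m - 1 - i)|
      ≤ ∑ i ∈ Finset.range m, |a ^ i * b ^ (m - 1 - i)| := Finset.abs_sum_le_sum_abs _ _
    _ ≤ ∑ i ∈ Finset.range m, R ^ (m - 1) := by
        apply Finset.sum_le_sum
        intro i hi
        rw [abs_mul, abs_pow, abs_pow]
        calc |a| ^ i * |b| ^ (m - 1 - i) ≤ R ^ i * R ^ (m - 1 - i) :=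
              mul_le_mul (pow_le_pow_left₀ (abs_nonneg _) ha _)
                (pow_le_pow_left₀ (abs_nonneg _) hb _) (by positivity) (by positivity)
          _ = R ^ (m - 1) := by
              rw [← pow_add]
              congr 1
              have := Finset.mem_range.mp hi
              omega
    _ = m * R ^ (m - 1) := by rw [Finset.sum_const, Finset.card_range, nsmul_eq_mul]

lemma abs_prod_sub_prod_le {ι : Type*} [DecidableEq ι] (s : Finset ι) (a b M : ι → ℝ)
    (hM0 : ∀ i, 0 ≤ M i) (ha : ∀ i, |a i| ≤ M i) (hb : ∀ i, |b i| ≤ M i) :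
    |∏ i ∈ s, a i - ∏ i ∈ s, b i| ≤ ∑ i ∈ s, |a i - b i| * ∏ j ∈ s.erase i, M j := by
  induction s using Finset.induction with
  | empty => simp
  | insert i₀ s hi₀ ih =>
    rw [Finset.prod_insert hi₀, Finset.prod_insert hi₀]
    have key : a i₀ * ∏ i ∈ s, a i - b i₀ * ∏ i ∈ s, b i
        = (a i₀ - b i₀) * ∏ i ∈ s, a i + b i₀ * (∏ i ∈ s, a i - ∏ i ∈ s, b i) := by ring
    rw [key]
    calc |(a i₀ - b i₀) * ∏ i ∈ s, a i + b i₀ * (∏ i ∈ s, a i - ∏ i ∈ s, b i)|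
        ≤ |a i₀ - b i₀| * |∏ i ∈ s, a i| + |b i₀| * |∏ i ∈ s, a i - ∏ i ∈ s, b i| := by
          refine (abs_add_le _ _).trans ?_
          rw [abs_mul, abs_mul]
      _ ≤ |a i₀ - b i₀| * ∏ j ∈ s, M j
            + M i₀ * ∑ i ∈ s, |a i - b i| * ∏ j ∈ s.erase i, M j := by
          apply add_le_add
          · apply mul_le_mul_of_nonneg_left _ (abs_nonneg _)
            rw [Finset.abs_prod]
            exact Finset.prod_le_prod (fun _ _ => abs_nonneg _) (fun i _ => ha i)
          · exact mul_le_mul (hb i₀) ih (abs_nonneg _) (hM0 i₀)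
      _ = ∑ i ∈ insert i₀ s, |a i - b i| * ∏ j ∈ (insert i₀ s).erase i, M j := by
          rw [Finset.sum_insert hi₀, Finset.erase_insert hi₀, Finset.mul_sum]
          congr 1
          apply Finset.sum_congr rfl
          intro i hi
          have hne : i₀ ≠ i := fun h => hi₀ (h ▸ hi)
          rw [Finset.erase_insert_of_ne hne,
            Finset.prod_insert (fun h => hi₀ (Finset.mem_of_mem_erase h))]
          ring

lemma minorAbsSum_le_of_mulVec' {n p : ℕ} (hn : 0 < n) (M : Matrix (Fin p) (Fin n) ℝ)
    (B c : ℝ) (hB0 : 0 ≤ B) (hB : ∀ i j, |M i j| ≤ B) (hc0 : 0 ≤ c)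
    (u : Fin n → ℝ) (hu : ∑ i, u i ^ 2 = 1)
    (hc : ∀ i, |(M.mulVec u) i| ≤ c) :
    (∑ s ∈ (Finset.powersetCard n (Finset.univ : Finset (Fin p))).attach,
      |(M.submatrix
        (fun i => ((s.1.orderIsoOfFin ((Finset.mem_powersetCard.mp s.2).2)) i : Fin p))
        id).det|)
    ≤ (p.choose n) * (Real.sqrt n * (n.factorial * (B ^ (n - 1) * c))) := by
  have hnuniv : (Finset.univ : Finset (Fin n)).Nonempty := ⟨⟨0, hn⟩, Finset.mem_univ _⟩
  obtain ⟨j, -, hj⟩ := Finset.exists_max_image Finset.univ (fun i => |u i|) hnuniv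
  have hj2 : 1 ≤ (n : ℝ) * u j ^ 2 := by
    calc (1:ℝ) = ∑ i, u i ^ 2 := hu.symm
      _ ≤ ∑ _i : Fin n, u j ^ 2 := by
          apply Finset.sum_le_sum
          intro i _
          have := hj i (Finset.mem_univ i)
          calc u i ^ 2 = |u i| ^ 2 := (sq_abs _).symm
            _ ≤ |u j| ^ 2 := by gcongr
            _ = u j ^ 2 := sq_abs _
      _ = (n : ℝ) * u j ^ 2 := by rw [Finset.sum_const, Finset.card_univ, Fintype.card_fin,
            nsmul_eq_mul]
  have huj : 1 ≤ Real.sqrt n * |u j| := by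
    have h1 : Real.sqrt 1 ≤ Real.sqrt ((n : ℝ) * u j ^ 2) := Real.sqrt_le_sqrt hj2
    rwa [Real.sqrt_one, Real.sqrt_mul (by positivity), Real.sqrt_sq_eq_abs] at h1
  -- bound each minor
  have key : ∀ (N : Matrix (Fin n) (Fin n) ℝ), (∀ i j', |N i j'| ≤ B) →
      (∀ i, |(N.mulVec u) i| ≤ c) → |N.det| ≤ Real.sqrt n * (n.factorial * (B ^ (n-1) * c)) := by
    intro N hNB hNc
    have hdet : (N.updateCol j (fun k ↦ ∑ i, (u i) • N k i)).det = u j • N.det :=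
      Matrix.det_updateCol_sum N j u
    have hcol : (fun k ↦ ∑ i, (u i) • N k i) = N.mulVec u := by
      funext k
      simp [Matrix.mulVec, dotProduct, mul_comm]
    rw [hcol] at hdet
    have hupd : |(N.updateCol j (N.mulVec u)).det| ≤
        n.factorial * ∏ j', Function.update (fun _ : Fin n => B) j c j' := by
      apply abs_det_le_col
      · intro j'
        by_cases h : j' = j <;> simp [Function.update, h, hB0, hc0]
      · intro i j'
        by_cases h : j' = j
        · subst h
          simp only [Matrix.updateCol_apply, if_pos rfl, Function.update_self]
          exact hNc i
        · simp only [Matrix.updateCol_apply, if_neg h, Function.update_of_ne h]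
          exact hNB i j'
    have hprod : ∏ j', Function.update (fun _ : Fin n => B) j c j' = c * B ^ (n-1) := by
      rw [Finset.prod_update_of_mem (Finset.mem_univ j)]
      congr 1
      rw [Finset.prod_const]
      congr 1
      rw [← Finset.erase_eq, Finset.card_erase_of_mem (Finset.mem_univ j),
        Finset.card_univ, Fintype.card_fin]
    rw [hprod] at hupd
    rw [hdet, smul_eq_mul, abs_mul] at hupd
    calc |N.det| ≤ (Real.sqrt n * |u j|) * |N.det| := by
          nth_rewrite 1 [← one_mul |N.det|]
          exact mul_le_mul_of_nonneg_right huj (abs_nonneg _)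
      _ = Real.sqrt n * (|u j| * |N.det|) := by ring
      _ ≤ Real.sqrt n * (n.factorial * (B ^ (n-1) * c)) := by
          apply mul_le_mul_of_nonneg_left _ (Real.sqrt_nonneg _)
          calc |u j| * |N.det| ≤ n.factorial * (c * B ^ (n-1)) := hupd
            _ = n.factorial * (B ^ (n-1) * c) := by ring
  calc (∑ s ∈ (Finset.powersetCard n (Finset.univ : Finset (Fin p))).attach,
      |(M.submatrix
        (fun i => ((s.1.orderIsoOfFin ((Finset.mem_powersetCard.mp s.2).2)) i : Fin p))
        id).det|)
      ≤ ∑ _s ∈ (Finset.powersetCard n (Finset.univ : Finset (Fin p))).attach,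
        Real.sqrt n * (n.factorial * (B ^ (n-1) * c)) := by
        apply Finset.sum_le_sum
        intro s _
        apply key
        · intro i j'
          exact hB _ _
        · intro i
          have : (((M.submatrix
              (fun i => ((s.1.orderIsoOfFin ((Finset.mem_powersetCard.mp s.2).2)) i : Fin p))
              id)).mulVec u) i = (M.mulVec u)
              ((s.1.orderIsoOfFin ((Finset.mem_powersetCard.mp s.2).2)) i : Fin p) := by
            simp [Matrix.mulVec, dotProduct, Matrix.submatrix]
          rw [this]
          exact hc _
    _ = (p.choose n) * (Real.sqrt n * (n.factorial * (B ^ (n-1) * c))) := by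
        rw [Finset.sum_const, Finset.card_attach, Finset.card_powersetCard,
          Finset.card_univ, Fintype.card_fin, nsmul_eq_mul]

lemma key_poly_bound {n k : ℕ} (β : Fin n → ℕ) (hβ : ∑ i, β i = k)
    (x x' : Fin n → ℝ) (R : ℝ) (hR : 0 ≤ R)
    (hx : ∀ i, |x i| ≤ R) (hx' : ∀ i, |x' i| ≤ R) :
    |∏ i, x' i ^ β i - ∏ i, x i ^ β i| ≤ (k * R ^ (k-1)) * ∑ i, |x' i - x i| := by
  have h1 := abs_prod_sub_prod_le Finset.univ (fun i => x' i ^ β i) (fun i => x i ^ β i)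
    (fun i => R ^ β i) (fun i => by positivity)
    (fun i => by rw [abs_pow]; exact pow_le_pow_left₀ (abs_nonneg _) (hx' i) _)
    (fun i => by rw [abs_pow]; exact pow_le_pow_left₀ (abs_nonneg _) (hx i) _)
  refine h1.trans ?_
  rw [Finset.mul_sum]
  apply Finset.sum_le_sum
  intro i _
  rcases Nat.eq_zero_or_pos (β i) with h0 | hpos
  · rw [h0]
    simp only [pow_zero, sub_self, abs_zero, zero_mul]
    positivity
  · have hprodR : ∏ j ∈ Finset.univ.erase i, R ^ β j = R ^ (∑ j ∈ Finset.univ.erase i, β j) :=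
      Finset.prod_pow_eq_pow_sum (Finset.univ.erase i) β R
    calc |x' i ^ β i - x i ^ β i| * ∏ j ∈ Finset.univ.erase i, R ^ β j
        ≤ (β i * R ^ (β i - 1) * |x' i - x i|) * R ^ (∑ j ∈ Finset.univ.erase i, β j) := by
          rw [hprodR]
          apply mul_le_mul_of_nonneg_right (abs_pow_sub_pow_le' _ _ _ (hx' i) (hx i) _)
            (by positivity)
      _ = (β i : ℝ) * R ^ (β i - 1 + ∑ j ∈ Finset.univ.erase i, β j) * |x' i - x i| := by
          rw [pow_add]; ring
      _ ≤ (k : ℝ) * R ^ (k - 1) * |x' i - x i| := by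
          have hsum : β i + ∑ j ∈ Finset.univ.erase i, β j = k := by
            rw [Finset.add_sum_erase _ _ (Finset.mem_univ i)]; exact hβ
          have hexp : β i - 1 + ∑ j ∈ Finset.univ.erase i, β j = k - 1 := by omega
          have hik : β i ≤ k := by omega
          rw [hexp]
          apply mul_le_mul_of_nonneg_right _ (abs_nonneg _)
          apply mul_le_mul_of_nonneg_right _ (by positivity)
          exact_mod_cast hik

lemma aux_frac (K C : ℝ) (hK : 0 ≤ K) (hC : 0 < C) : K * (C / (K + 1)) < C := by
  rw [mul_div_assoc', div_lt_iff₀ (by linarith)]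
  nlinarith

set_option maxHeartbeats 2000000 in
/-- Uniform isolated singularity: let `F (t, x) = (t, f (t, x))` be a real
analytic family on a neighborhood `W` of `0` in `ℝ × ℝⁿ` with values in `ℝ × ℝᵖ` (`n ≤ p`),
`f (t, 0) = 0`, such that `f₀ = f (0, ·)` has isolated singularity at `0` (injective and
immersive away from `0` on a neighborhood `U` of `0`).  Let `A₀` be a real analytic
matrix-valued map with `f₀ x' - f₀ x = A₀ (x, x') ⬝ (x' - x)`, satisfying the Lojasiewicz
inequality `‖Δ̃f₀ (x, x')‖ ≥ C ‖(x, x')‖ ^ α` near `0`.  If `k ≥ ⌊α⌋ + 2` and each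
component of `f (t, x) - f (0, x)` lies in the `k`-th power of the ideal `(x₁, …, xₙ)`
(i.e. `f (t, x) - f (0, x) = ∑_{|β| = k} x ^ β • H_β (t, x)` with `H_β` analytic), then
the family has uniform isolated singularity: there are `δ, ε > 0` such that for every
`|t| < δ`, the map `f (t, ·)` is injective on the ball `{‖x‖ < ε}` and its derivative is
injective at every `x` with `0 < ‖x‖ < ε`. -/
theorem uniform_isolated_singularity {n p : ℕ} (hnp : n ≤ p)
    (W : Set (ℝ × EuclideanSpace ℝ (Fin n))) (hWo : IsOpen W)
    (hW0 : ((0:ℝ), (0 : EuclideanSpace ℝ (Fin n))) ∈ W)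
    (f : ℝ × EuclideanSpace ℝ (Fin n) → EuclideanSpace ℝ (Fin p))
    (hf : AnalyticOnNhd ℝ f W)
    (hf0 : ∀ t : ℝ, (t, (0 : EuclideanSpace ℝ (Fin n))) ∈ W → f (t, 0) = 0)
    -- `f₀` has isolated singularity at `0`:
    (U : Set (EuclideanSpace ℝ (Fin n))) (hU : U ∈ nhds 0)
    (hUW : ∀ x ∈ U, ((0:ℝ), x) ∈ W)
    (hinj : Set.InjOn (fun x => f (0, x)) U)
    (himm : ∀ x ∈ U, x ≠ 0 →
      Function.Injective (fderiv ℝ (fun y : EuclideanSpace ℝ (Fin n) => f (0, y)) x))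
    -- Hadamard matrix for `f₀`:
    (A₀ : EuclideanSpace ℝ (Fin n) → EuclideanSpace ℝ (Fin n) → Matrix (Fin p) (Fin n) ℝ)
    (hA₀ : ∀ i j, AnalyticOnNhd ℝ
      (fun q : EuclideanSpace ℝ (Fin n) × EuclideanSpace ℝ (Fin n) => A₀ q.1 q.2 i j)
      (U ×ˢ U))
    (hA₀f : ∀ x ∈ U, ∀ x' ∈ U, ∀ i,
      f (0, x') i - f (0, x) i = (A₀ x x').mulVec (x' - x) i)
    -- Lojasiewicz inequality for `Δ̃f₀`:
    (C ε₁ α : ℝ) (hC : 0 < C) (hε₁ : 0 < ε₁) (hα : 0 < α)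
    (hLoj : ∀ x ∈ U, ∀ x' ∈ U, ‖(x, x')‖ < ε₁ →
      C * ‖(x, x')‖ ^ α ≤ ‖f (0, x') - f (0, x)‖ + minorAbsSum n p (A₀ x x'))
    -- `f_t - f₀` lies in the `k`-th power of the ideal `(x₁, …, xₙ)`:
    (k : ℕ) (hk : ⌊α⌋₊ + 2 ≤ k)
    (S : Finset (Fin n → ℕ)) (hS : ∀ β ∈ S, ∑ i, β i = k)
    (H : (Fin n → ℕ) → ℝ × EuclideanSpace ℝ (Fin n) → EuclideanSpace ℝ (Fin p))
    (hH : ∀ β ∈ S, AnalyticOnNhd ℝ (H β) W)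
    (hdiff : ∀ (t : ℝ) (x : EuclideanSpace ℝ (Fin n)), (t, x) ∈ W → ((0:ℝ), x) ∈ W →
      f (t, x) - f (0, x) = ∑ β ∈ S, (∏ i, x i ^ β i) • H β (t, x)) :
    ∃ δ > (0:ℝ), ∃ ε > (0:ℝ), ∀ t : ℝ, |t| < δ →
      Set.InjOn (fun x => f (t, x)) (Metric.ball 0 ε) ∧
      ∀ x : EuclideanSpace ℝ (Fin n), 0 < ‖x‖ → ‖x‖ < ε →
        Function.Injective (fderiv ℝ (fun y : EuclideanSpace ℝ (Fin n) => f (t, y)) x) := by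
  classical
  rcases Nat.eq_zero_or_pos n with hn0 | hn
  · subst hn0
    refine ⟨1, one_pos, 1, one_pos, fun t _ => ⟨?_, ?_⟩⟩
    · intro a _ b _ _
      ext i; exact i.elim0
    · intro x hx0 _
      exfalso
      have hx : x = 0 := by ext i; exact i.elim0
      rw [hx, norm_zero] at hx0
      exact lt_irrefl _ hx0
  -- setup of neighborhoods
  obtain ⟨r, hr, hrW⟩ := Metric.mem_nhds_iff.mp (hWo.mem_nhds hW0)
  obtain ⟨r1, hr1, hr1U⟩ := Metric.mem_nhds_iff.mp hU
  set δ0 : ℝ := r / 4 with hδ0def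
  have hδ0 : 0 < δ0 := by positivity
  set ρ : ℝ := min (r / 4) (min (r1 / 2) (ε₁ / 2)) with hρdef
  have hρ : 0 < ρ := by positivity
  have hρr : ρ ≤ r / 4 := min_le_left _ _
  have hρr1 : ρ ≤ r1 / 2 := (min_le_right _ _).trans (min_le_left _ _)
  have hρε₁ : ρ ≤ ε₁ / 2 := (min_le_right _ _).trans (min_le_right _ _)
  have hρU : closedBall (0 : EuclideanSpace ℝ (Fin n)) ρ ⊆ U := by
    intro y hy
    apply hr1U
    rw [mem_ball_zero_iff]
    have : ‖y‖ ≤ ρ := mem_closedBall_zero_iff.mp hy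
    linarith
  set Q : Set (ℝ × EuclideanSpace ℝ (Fin n)) :=
    closedBall (0:ℝ) δ0 ×ˢ closedBall (0 : EuclideanSpace ℝ (Fin n)) ρ with hQdef
  have hQW : Q ⊆ W := by
    rintro ⟨t, y⟩ ⟨ht, hy⟩
    apply hrW
    rw [mem_ball]
    rw [Prod.dist_eq]
    apply max_lt
    · have := mem_closedBall.mp ht
      simp only at this ⊢
      calc dist t 0 ≤ δ0 := this
        _ < r := by rw [hδ0def]; linarith
    · have := mem_closedBall.mp hy
      calc dist y 0 ≤ ρ := this
        _ < r := by linarith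
  have hQc : IsCompact Q := (isCompact_closedBall _ _).prod (isCompact_closedBall _ _)
  have hQconv : Convex ℝ Q := (convex_closedBall _ _).prod (convex_closedBall _ _)
  have hQmem : ∀ t : ℝ, |t| ≤ δ0 → ∀ y ∈ closedBall (0 : EuclideanSpace ℝ (Fin n)) ρ,
      (t, y) ∈ Q := by
    intro t ht y hy
    exact ⟨mem_closedBall_zero_iff.mpr (by rwa [Real.norm_eq_abs]), hy⟩
  -- bounds for the H β on Q
  have hHbounds : ∀ β : Fin n → ℕ, ∃ Mβ : ℝ, 0 ≤ Mβ ∧ (β ∈ S →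
      (∀ z ∈ Q, ‖H β z‖ ≤ Mβ) ∧
      (∀ z ∈ Q, ∀ w ∈ Q, ‖H β w - H β z‖ ≤ Mβ * ‖w - z‖)) := by
    intro β
    by_cases hβS : β ∈ S
    · obtain ⟨M1, hM1⟩ := hQc.exists_bound_of_continuousOn ((hH β hβS).continuousOn.mono hQW)
      have hfd : AnalyticOnNhd ℝ (fderiv ℝ (H β)) W := (hH β hβS).fderiv
      obtain ⟨M2, hM2⟩ := hQc.exists_bound_of_continuousOn (hfd.continuousOn.mono hQW)
      refine ⟨max (max M1 M2) 0, le_max_right _ _, fun _ => ⟨?_, ?_⟩⟩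
      · intro z hz
        exact (hM1 z hz).trans ((le_max_left _ _).trans (le_max_left _ _))
      · intro z hz w hw
        apply hQconv.norm_image_sub_le_of_norm_fderiv_le
          (fun y hy => ((hH β hβS) y (hQW hy)).differentiableAt)
          (fun y hy => (hM2 y hy).trans ((le_max_right _ _).trans (le_max_left _ _))) hz hw
    · exact ⟨0, le_refl _, fun h => absurd h hβS⟩
  choose MH hMH0 hMHball using hHbounds
  -- bound for the entries of A₀
  have hBex : ∃ B : ℝ, 0 ≤ B ∧ ∀ x ∈ closedBall (0 : EuclideanSpace ℝ (Fin n)) ρ,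
      ∀ x' ∈ closedBall (0 : EuclideanSpace ℝ (Fin n)) ρ, ∀ i j, |A₀ x x' i j| ≤ B := by
    have hcont : ContinuousOn
        (fun q : EuclideanSpace ℝ (Fin n) × EuclideanSpace ℝ (Fin n) =>
          ∑ i, ∑ j, |A₀ q.1 q.2 i j|)
        (closedBall 0 ρ ×ˢ closedBall 0 ρ) := by
      apply continuousOn_finset_sum
      intro i _
      apply continuousOn_finset_sum
      intro j _
      exact ((hA₀ i j).continuousOn.mono (prod_mono hρU hρU)).abs
    obtain ⟨B0, hB0⟩ := ((isCompact_closedBall _ _).prod (isCompact_closedBall _ _)).exists_bound_of_continuousOn hcont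
    refine ⟨max B0 0, le_max_right _ _, ?_⟩
    intro x hx x' hx' i j
    have h1 : |A₀ x x' i j| ≤ ∑ i', ∑ j', |A₀ x x' i' j'| := by
      calc |A₀ x x' i j| ≤ ∑ j', |A₀ x x' i j'| :=
            Finset.single_le_sum (f := fun j' => |A₀ x x' i j'|)
              (fun _ _ => abs_nonneg _) (Finset.mem_univ j)
        _ ≤ ∑ i', ∑ j', |A₀ x x' i' j'| :=
            Finset.single_le_sum (f := fun i' => ∑ j', |A₀ x x' i' j'|)
              (fun _ _ => Finset.sum_nonneg fun _ _ => abs_nonneg _) (Finset.mem_univ i)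
    have h2 := hB0 (x, x') ⟨hx, hx'⟩
    rw [Real.norm_eq_abs] at h2
    have h3 : ∑ i', ∑ j', |A₀ x x' i' j'| ≤ B0 := (le_abs_self _).trans h2
    exact h1.trans (h3.trans (le_max_left _ _))
  obtain ⟨B, hB0, hB⟩ := hBex
  -- the uniform Lipschitz-type bound for g t = f(t,·) - f(0,·)
  set K₁ : ℝ := ∑ β ∈ S, ((k : ℝ) * n * MH β + ρ * MH β) with hK₁def
  have hK₁0 : 0 ≤ K₁ := Finset.sum_nonneg fun β _ => by
    have := hMH0 β
    positivity
  have hgsum : ∀ t : ℝ, |t| ≤ δ0 → ∀ y ∈ closedBall (0 : EuclideanSpace ℝ (Fin n)) ρ,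
      f (t, y) - f (0, y) = ∑ β ∈ S, (∏ i, y i ^ β i) • H β (t, y) := by
    intro t ht y hy
    exact hdiff t y (hQW (hQmem t ht y hy)) (hQW (hQmem 0 (by simpa using hδ0.le) y hy))
  have GLip : ∀ t : ℝ, |t| ≤ δ0 →
      ∀ x ∈ closedBall (0 : EuclideanSpace ℝ (Fin n)) ρ,
      ∀ x' ∈ closedBall (0 : EuclideanSpace ℝ (Fin n)) ρ,
      ‖(f (t, x') - f (0, x')) - (f (t, x) - f (0, x))‖
        ≤ K₁ * (max ‖x‖ ‖x'‖) ^ (k - 1) * ‖x' - x‖ := by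
    intro t ht x hx x' hx'
    set R : ℝ := max ‖x‖ ‖x'‖ with hRdef
    have hR0 : 0 ≤ R := le_trans (norm_nonneg x) (le_max_left _ _)
    have hRρ : R ≤ ρ := max_le (mem_closedBall_zero_iff.mp hx) (mem_closedBall_zero_iff.mp hx')
    rw [hgsum t ht x' hx', hgsum t ht x hx, ← Finset.sum_sub_distrib]
    refine (norm_sum_le _ _).trans ?_
    have hrhs : K₁ * R ^ (k - 1) * ‖x' - x‖
        = ∑ β ∈ S, (((k : ℝ) * n * MH β + ρ * MH β) * R ^ (k - 1) * ‖x' - x‖) := by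
      rw [hK₁def, Finset.sum_mul, Finset.sum_mul]
    rw [hrhs]
    apply Finset.sum_le_sum
    intro β hβS
    obtain ⟨hMb, hMl⟩ := hMHball β hβS
    have htQ : (t, x) ∈ Q := hQmem t ht x hx
    have htQ' : (t, x') ∈ Q := hQmem t ht x' hx'
    have split : (∏ i, x' i ^ β i) • H β (t, x') - (∏ i, x i ^ β i) • H β (t, x)
        = ((∏ i, x' i ^ β i) - (∏ i, x i ^ β i)) • H β (t, x')
          + (∏ i, x i ^ β i) • (H β (t, x') - H β (t, x)) := by
      rw [sub_smul, smul_sub]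
      abel
    rw [split]
    refine (norm_add_le _ _).trans ?_
    rw [norm_smul, norm_smul, Real.norm_eq_abs, Real.norm_eq_abs]
    have hcoord : ∀ i, |x i| ≤ R := fun i =>
      (euclid_coord_le_norm x i).trans (le_max_left _ _)
    have hcoord' : ∀ i, |x' i| ≤ R := fun i =>
      (euclid_coord_le_norm x' i).trans (le_max_right _ _)
    have h1 : |∏ i, x' i ^ β i - ∏ i, x i ^ β i|
        ≤ (k : ℝ) * R ^ (k - 1) * ∑ i, |x' i - x i| :=
      key_poly_bound β (hS β hβS) x x' R hR0 hcoord hcoord'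
    have h2 : ∑ i, |x' i - x i| ≤ (n : ℝ) * ‖x' - x‖ := by
      calc ∑ i, |x' i - x i| ≤ ∑ _i : Fin n, ‖x' - x‖ := by
            apply Finset.sum_le_sum
            intro i _
            have := euclid_coord_le_norm (x' - x) i
            simpa using this
        _ = (n : ℝ) * ‖x' - x‖ := by
            rw [Finset.sum_const, Finset.card_univ, Fintype.card_fin, nsmul_eq_mul]
    have h3 : ‖H β (t, x')‖ ≤ MH β := hMb _ htQ'
    have h4 : ‖H β (t, x') - H β (t, x)‖ ≤ MH β * ‖x' - x‖ := by
      have := hMl (t, x) htQ (t, x') htQ'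
      have hnorm : ‖((t, x') : ℝ × EuclideanSpace ℝ (Fin n)) - (t, x)‖ = ‖x' - x‖ := by
        rw [Prod.norm_def]
        simp
      rwa [hnorm] at this
    have h5 : |∏ i, x i ^ β i| ≤ R ^ (k - 1) * ρ := by
      have hk1 : 1 ≤ k := by omega
      calc |∏ i, x i ^ β i| = ∏ i, |x i| ^ β i := by
            rw [Finset.abs_prod]
            exact Finset.prod_congr rfl fun i _ => abs_pow _ _
        _ ≤ ∏ i, R ^ β i :=
            Finset.prod_le_prod (fun i _ => by positivity)
              (fun i _ => pow_le_pow_left₀ (abs_nonneg _) (hcoord i) _)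
        _ = R ^ k := by rw [Finset.prod_pow_eq_pow_sum, hS β hβS]
        _ = R ^ (k - 1) * R := by
            rw [← pow_succ]
            congr 1
            omega
        _ ≤ R ^ (k - 1) * ρ := by
            apply mul_le_mul_of_nonneg_left hRρ (by positivity)
    have hMH0' := hMH0 β
    calc |∏ i, x' i ^ β i - ∏ i, x i ^ β i| * ‖H β (t, x')‖
          + |∏ i, x i ^ β i| * ‖H β (t, x') - H β (t, x)‖
        ≤ ((k : ℝ) * R ^ (k - 1) * ((n : ℝ) * ‖x' - x‖)) * MH β
          + (R ^ (k - 1) * ρ) * (MH β * ‖x' - x‖) := by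
          apply add_le_add
          · apply mul_le_mul _ h3 (norm_nonneg _) (by positivity)
            exact h1.trans (by
              apply mul_le_mul_of_nonneg_left h2 (by positivity))
          · exact mul_le_mul h5 h4 (norm_nonneg _) (by positivity)
      _ = ((k : ℝ) * n * MH β + ρ * MH β) * R ^ (k - 1) * ‖x' - x‖ := by ring
  -- << MARKER >>
  -- the big constant and the radius ε
  set Kbig : ℝ := 2 * K₁ * ρ
      + (p.choose n) * (Real.sqrt n * (n.factorial * (B ^ (n - 1) * (K₁ * 2 ^ (k - 1)))))
    with hKbigdef
  have hKbig0 : 0 ≤ Kbig := by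
    have h1 : (0:ℝ) ≤ Real.sqrt n := Real.sqrt_nonneg _
    positivity
  have hα1 : α < (k : ℝ) - 1 := by
    have h1 : α < ⌊α⌋₊ + 1 := Nat.lt_floor_add_one α
    have h2 : ((⌊α⌋₊ : ℝ) + 2) ≤ (k : ℝ) := by exact_mod_cast hk
    linarith
  set γ : ℝ := ((k : ℝ) - 1) - α with hγdef
  have hγ : 0 < γ := by rw [hγdef]; linarith
  set ε₂ : ℝ := (C / (Kbig + 1)) ^ (1 / γ) with hε₂def
  have hCK : 0 < C / (Kbig + 1) := by positivity
  have hε₂pos : 0 < ε₂ := Real.rpow_pos_of_pos hCK _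
  set ε : ℝ := min (ρ / 2) (min ε₁ ε₂) with hεdef
  have hεpos : 0 < ε := lt_min (by positivity) (lt_min hε₁ hε₂pos)
  have hερ : ε ≤ ρ / 2 := min_le_left _ _
  have hεε₁ : ε ≤ ε₁ := (min_le_right _ _).trans (min_le_left _ _)
  have hεε₂ : ε ≤ ε₂ := (min_le_right _ _).trans (min_le_right _ _)
  -- the core numerical estimate
  have core : ∀ R : ℝ, 0 < R → R < ε → ¬ (C * R ^ α ≤ Kbig * R ^ (k - 1)) := by
    intro R hR0 hRε hcon
    have hRpow : R ^ (k - 1) = R ^ (((k - 1 : ℕ)) : ℝ) := (Real.rpow_natCast R (k - 1)).symm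
    have hknat : (((k - 1 : ℕ)) : ℝ) = (k : ℝ) - 1 := by
      have : (1:ℕ) ≤ k := by omega
      push_cast [Nat.cast_sub this]
      ring
    have hsplit : R ^ ((k : ℝ) - 1) = R ^ α * R ^ γ := by
      rw [← Real.rpow_add hR0]
      congr 1
      rw [hγdef]; ring
    rw [hRpow, hknat, hsplit] at hcon
    have hRα : 0 < R ^ α := Real.rpow_pos_of_pos hR0 _
    have h2 : C ≤ Kbig * R ^ γ := by
      have h3 : C * R ^ α ≤ (Kbig * R ^ γ) * R ^ α := by
        calc C * R ^ α ≤ Kbig * (R ^ α * R ^ γ) := hcon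
          _ = (Kbig * R ^ γ) * R ^ α := by ring
      exact le_of_mul_le_mul_right h3 hRα
    have h4 : R ^ γ ≤ ε₂ ^ γ :=
      Real.rpow_le_rpow hR0.le (le_of_lt (lt_of_lt_of_le hRε hεε₂)) hγ.le
    have h5 : ε₂ ^ γ = C / (Kbig + 1) := by
      rw [hε₂def, ← Real.rpow_mul hCK.le, one_div, inv_mul_cancel₀ hγ.ne', Real.rpow_one]
    have h6 : Kbig * (C / (Kbig + 1)) < C := aux_frac Kbig C hKbig0 hC
    have h7 : C ≤ Kbig * (C / (Kbig + 1)) := by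
      calc C ≤ Kbig * R ^ γ := h2
        _ ≤ Kbig * ε₂ ^ γ := by
            apply mul_le_mul_of_nonneg_left h4 hKbig0
        _ = Kbig * (C / (Kbig + 1)) := by rw [h5]
    linarith
  -- analyticity of slices
  have hslice : ∀ t : ℝ, ∀ x : EuclideanSpace ℝ (Fin n), (t, x) ∈ W →
      AnalyticAt ℝ (fun y => f (t, y)) x := fun t x hx =>
    (hf _ hx).comp (analyticAt_const.prod analyticAt_id)
  -- the derivative of f(0,·) is given by A₀ on the diagonal
  have hDf₀ : ∀ x : EuclideanSpace ℝ (Fin n), ‖x‖ < ρ →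
      ∀ u : EuclideanSpace ℝ (Fin n), ∀ i : Fin p,
      fderiv ℝ (fun y => f (0, y)) x u i = (A₀ x x).mulVec u i := by
    intro x hxρ u i
    have hxU : x ∈ U := hρU (mem_closedBall_zero_iff.mpr hxρ.le)
    have hxW : ((0:ℝ), x) ∈ W := hUW x hxU
    have hf₀d : DifferentiableAt ℝ (fun y => f (0, y)) x := (hslice 0 x hxW).differentiableAt
    set L := fderiv ℝ (fun y => f (0, y)) x with hLdef
    have hLi : HasFDerivAt (fun y => f (0, y) i)
        ((EuclideanSpace.proj (𝕜 := ℝ) i : EuclideanSpace ℝ (Fin p) →L[ℝ] ℝ).comp L) x :=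
      (EuclideanSpace.proj (𝕜 := ℝ) i :
        EuclideanSpace ℝ (Fin p) →L[ℝ] ℝ).hasFDerivAt.comp x hf₀d.hasFDerivAt
    set Li : EuclideanSpace ℝ (Fin n) →L[ℝ] ℝ :=
      ∑ j, A₀ x x i j • (EuclideanSpace.proj (𝕜 := ℝ) j :
        EuclideanSpace ℝ (Fin n) →L[ℝ] ℝ) with hLidef
    have hterm : ∀ j : Fin n,
        HasFDerivAt (fun y : EuclideanSpace ℝ (Fin n) => A₀ x y i j * (y j - x j))
          (A₀ x x i j • (EuclideanSpace.proj (𝕜 := ℝ) j :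
            EuclideanSpace ℝ (Fin n) →L[ℝ] ℝ)) x := by
      intro j
      have hAan : AnalyticAt ℝ (fun y => A₀ x y i j) x :=
        ((hA₀ i j) (x, x) (mk_mem_prod hxU hxU)).comp (analyticAt_const.prod analyticAt_id)
      have h1 : HasFDerivAt (fun y => A₀ x y i j)
          (fderiv ℝ (fun y => A₀ x y i j) x) x := hAan.differentiableAt.hasFDerivAt
      have h2 : HasFDerivAt (fun y : EuclideanSpace ℝ (Fin n) => y j - x j)
          (EuclideanSpace.proj (𝕜 := ℝ) j : EuclideanSpace ℝ (Fin n) →L[ℝ] ℝ) x :=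
        ((EuclideanSpace.proj (𝕜 := ℝ) j :
          EuclideanSpace ℝ (Fin n) →L[ℝ] ℝ).hasFDerivAt).sub_const (x j)
      have h3 := h1.mul' h2
      exact h3.congr_fderiv (by ext v; simp)
    have hψ : HasFDerivAt
        (fun y : EuclideanSpace ℝ (Fin n) => f (0, x) i + ∑ j, A₀ x y i j * (y j - x j))
        Li x := by
      rw [hLidef]
      exact (HasFDerivAt.fun_sum (fun j _ => hterm j)).const_add (f (0, x) i)
    have heq : (fun y : EuclideanSpace ℝ (Fin n) => f (0, y) i)
        =ᶠ[nhds x] (fun y => f (0, x) i + ∑ j, A₀ x y i j * (y j - x j)) := by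
      filter_upwards [isOpen_ball.mem_nhds (mem_ball_zero_iff.mpr hxρ)] with y hy
      have hyU : y ∈ U := hρU (ball_subset_closedBall hy)
      have := hA₀f x hxU y hyU i
      have hmv : (A₀ x y).mulVec (y - x) i = ∑ j, A₀ x y i j * (y j - x j) := by
        simp [Matrix.mulVec, dotProduct, mul_sub, Finset.sum_sub_distrib]
      rw [hmv] at this
      linarith
    have hφ : HasFDerivAt (fun y : EuclideanSpace ℝ (Fin n) => f (0, y) i) Li x :=
      hψ.congr_of_eventuallyEq heq
    have huniq := hLi.unique hφ
    have h8 : ((EuclideanSpace.proj (𝕜 := ℝ) i :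
        EuclideanSpace ℝ (Fin p) →L[ℝ] ℝ).comp L) u = L u i := rfl
    rw [← h8, huniq, hLidef]
    rw [ContinuousLinearMap.sum_apply]
    simp only [ContinuousLinearMap.smul_apply]
    simp [Matrix.mulVec, dotProduct, EuclideanSpace.proj]
    -- bound on the derivative of `g t`
  have hDg : ∀ t : ℝ, |t| ≤ δ0 → ∀ x : EuclideanSpace ℝ (Fin n), 0 < ‖x‖ → ‖x‖ < ε →
      ‖fderiv ℝ (fun y => f (t, y) - f (0, y)) x‖ ≤ K₁ * (2 * ‖x‖) ^ (k - 1) := by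
    intro t ht x hx0 hxε
    have hxρ2 : ‖x‖ < ρ / 2 := lt_of_lt_of_le hxε hερ
    have hxcb : x ∈ closedBall (0 : EuclideanSpace ℝ (Fin n)) ρ :=
      mem_closedBall_zero_iff.mpr (by linarith)
    have hxQW : (t, x) ∈ W := hQW (hQmem t ht x hxcb)
    have hx0W : ((0:ℝ), x) ∈ W := hQW (hQmem 0 (by simpa using hδ0.le) x hxcb)
    have hd : DifferentiableAt ℝ (fun y => f (t, y) - f (0, y)) x :=
      ((hslice t x hxQW).sub (hslice 0 x hx0W)).differentiableAt
    apply hd.hasFDerivAt.le_of_lip' (by positivity)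
    filter_upwards [isOpen_ball.mem_nhds (mem_ball_self hx0)] with y hy
    have hyx : ‖y - x‖ < ‖x‖ := by rwa [mem_ball, dist_eq_norm] at hy
    have hy2 : ‖y‖ ≤ 2 * ‖x‖ := by
      have h := norm_sub_norm_le y x
      linarith
    have hycb : y ∈ closedBall (0 : EuclideanSpace ℝ (Fin n)) ρ :=
      mem_closedBall_zero_iff.mpr (by linarith)
    have hGl := GLip t ht x hxcb y hycb
    refine hGl.trans ?_
    have hmax : max ‖x‖ ‖y‖ ≤ 2 * ‖x‖ := max_le (by linarith) hy2
    have hpow : (max ‖x‖ ‖y‖) ^ (k - 1) ≤ (2 * ‖x‖) ^ (k - 1) :=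
      pow_le_pow_left₀ (le_trans (norm_nonneg x) (le_max_left _ _)) hmax _
    apply mul_le_mul_of_nonneg_right _ (norm_nonneg _)
    exact mul_le_mul_of_nonneg_left hpow hK₁0
  -- corollary of the minor bound lemma
  have minorB : ∀ x ∈ closedBall (0 : EuclideanSpace ℝ (Fin n)) ρ,
      ∀ x' ∈ closedBall (0 : EuclideanSpace ℝ (Fin n)) ρ,
      ∀ w : EuclideanSpace ℝ (Fin n), ‖w‖ = 1 → ∀ c : ℝ, 0 ≤ c →
      (∀ i, |((A₀ x x').mulVec w) i| ≤ c) →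
      minorAbsSum n p (A₀ x x')
        ≤ (p.choose n) * (Real.sqrt n * (n.factorial * (B ^ (n - 1) * c))) := by
    intro x hx x' hx' w hw c hc0 hcb
    have hsum : ∑ i, w i ^ 2 = 1 := by
      have h := hw
      rw [EuclideanSpace.norm_eq] at h
      have h2 : (∑ i, ‖w i‖ ^ 2) = 1 := Real.sqrt_eq_one.mp h
      simpa [Real.norm_eq_abs, sq_abs] using h2
    have := minorAbsSum_le_of_mulVec' hn (A₀ x x') B c hB0
      (fun i j => hB x hx x' hx' i j) hc0 w hsum hcb
    simpa [minorAbsSum] using this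
  -- conclusion
  refine ⟨δ0, hδ0, ε, hεpos, fun t ht => ⟨?_, ?_⟩⟩
  · -- injectivity
    intro x hx x' hx' hfe
    by_contra hne
    have hfexy : f (t, x') = f (t, x) := by
      have : f (t, x) = f (t, x') := hfe
      exact this.symm
    have hxn : ‖x‖ < ε := mem_ball_zero_iff.mp hx
    have hx'n : ‖x'‖ < ε := mem_ball_zero_iff.mp hx'
    set R : ℝ := max ‖x‖ ‖x'‖ with hRdef
    have hR0 : 0 < R := by
      by_contra h
      push_neg at h
      have h1 : ‖x‖ ≤ 0 := le_trans (le_max_left _ _) h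
      have h2 : ‖x'‖ ≤ 0 := le_trans (le_max_right _ _) h
      have hx0 : x = 0 := norm_eq_zero.mp (le_antisymm h1 (norm_nonneg _))
      have hx'0 : x' = 0 := norm_eq_zero.mp (le_antisymm h2 (norm_nonneg _))
      exact hne (hx0.trans hx'0.symm)
    have hRε : R < ε := max_lt hxn hx'n
    have hRρ' : R ≤ ρ := by linarith [hερ]
    have hxcb : x ∈ closedBall (0 : EuclideanSpace ℝ (Fin n)) ρ :=
      mem_closedBall_zero_iff.mpr (by linarith)
    have hx'cb : x' ∈ closedBall (0 : EuclideanSpace ℝ (Fin n)) ρ :=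
      mem_closedBall_zero_iff.mpr (by linarith)
    have hxU : x ∈ U := hρU hxcb
    have hx'U : x' ∈ U := hρU hx'cb
    have hv0 : x' - x ≠ 0 := sub_ne_zero.mpr (Ne.symm hne)
    have hvn : 0 < ‖x' - x‖ := norm_pos_iff.mpr hv0
    set w : EuclideanSpace ℝ (Fin n) := ‖x' - x‖⁻¹ • (x' - x) with hwdef
    have hw1 : ‖w‖ = 1 := norm_smul_inv_norm hv0
    have hgdiff := GLip t ht.le x hxcb x' hx'cb
    have hfd : f (0, x') - f (0, x)
        = -((f (t, x') - f (0, x')) - (f (t, x) - f (0, x))) := by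
      rw [hfexy]
      abel
    have hnormD : ‖f (0, x') - f (0, x)‖ ≤ K₁ * R ^ (k - 1) * ‖x' - x‖ := by
      rw [hfd, norm_neg]
      exact hgdiff
    have hcomp : ∀ i, |((A₀ x x').mulVec w) i| ≤ K₁ * R ^ (k - 1) := by
      intro i
      have h1 : (A₀ x x').mulVec (x' - x) i = f (0, x') i - f (0, x) i :=
        (hA₀f x hxU x' hx'U i).symm
      have h2 : ((A₀ x x').mulVec w) i = ‖x' - x‖⁻¹ * ((A₀ x x').mulVec (x' - x) i) := by
        rw [hwdef]
        rw [WithLp.ofLp_smul, Matrix.mulVec_smul]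
        simp
      rw [h2, h1]
      have h3 : |f (0, x') i - f (0, x) i| ≤ ‖f (0, x') - f (0, x)‖ := by
        have := euclid_coord_le_norm (f (0, x') - f (0, x)) i
        simpa using this
      rw [abs_mul, abs_inv, abs_norm]
      calc ‖x' - x‖⁻¹ * |f (0, x') i - f (0, x) i|
          ≤ ‖x' - x‖⁻¹ * (K₁ * R ^ (k - 1) * ‖x' - x‖) :=
            mul_le_mul_of_nonneg_left (h3.trans hnormD) (by positivity)
        _ = K₁ * R ^ (k - 1) := by
            field_simp
    have hminor := minorB x hxcb x' hx'cb w hw1 (K₁ * R ^ (k - 1)) (by positivity) hcomp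
    have hpair : ‖((x, x') : EuclideanSpace ℝ (Fin n) × EuclideanSpace ℝ (Fin n))‖ = R := by
      rw [Prod.norm_def]
    have hloj := hLoj x hxU x' hx'U (by rw [hpair]; exact lt_of_lt_of_le hRε hεε₁)
    rw [hpair] at hloj
    have hfinal : C * R ^ α ≤ Kbig * R ^ (k - 1) := by
      have hvR : ‖x' - x‖ ≤ 2 * R := by
        calc ‖x' - x‖ ≤ ‖x'‖ + ‖x‖ := norm_sub_le _ _
          _ ≤ R + R := add_le_add (le_max_right _ _) (le_max_left _ _)
          _ = 2 * R := by ring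
      have h1 : ‖f (0, x') - f (0, x)‖ ≤ 2 * K₁ * ρ * R ^ (k - 1) := by
        calc ‖f (0, x') - f (0, x)‖ ≤ K₁ * R ^ (k - 1) * ‖x' - x‖ := hnormD
          _ ≤ K₁ * R ^ (k - 1) * (2 * R) :=
              mul_le_mul_of_nonneg_left hvR (by positivity)
          _ = 2 * K₁ * R * R ^ (k - 1) := by ring
          _ ≤ 2 * K₁ * ρ * R ^ (k - 1) := by
              apply mul_le_mul_of_nonneg_right _ (by positivity)
              have : 2 * K₁ * R ≤ 2 * K₁ * ρ :=
                mul_le_mul_of_nonneg_left hRρ' (by positivity)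
              exact this
      have h2 : minorAbsSum n p (A₀ x x')
          ≤ (p.choose n) * (Real.sqrt n * (n.factorial * (B ^ (n - 1) * (K₁ * 2 ^ (k - 1)))))
            * R ^ (k - 1) := by
        refine hminor.trans ?_
        have e1 : (p.choose n : ℝ) * (Real.sqrt n * (n.factorial * (B ^ (n - 1) * (K₁ * R ^ (k - 1)))))
            = ((p.choose n : ℝ) * (Real.sqrt n * (n.factorial * (B ^ (n - 1) * K₁)))) * R ^ (k - 1) := by
          ring
        rw [e1]
        apply mul_le_mul_of_nonneg_right _ (by positivity)
        have h2pow : (1:ℝ) ≤ 2 ^ (k - 1) := one_le_pow₀ (by norm_num)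
        have hsq : (0:ℝ) ≤ Real.sqrt n := Real.sqrt_nonneg _
        nlinarith [mul_nonneg (mul_nonneg (mul_nonneg (Nat.cast_nonneg (p.choose n)) hsq)
          (mul_nonneg (Nat.cast_nonneg n.factorial) (pow_nonneg hB0 (n-1)))) hK₁0]
      calc C * R ^ α ≤ ‖f (0, x') - f (0, x)‖ + minorAbsSum n p (A₀ x x') := hloj
        _ ≤ 2 * K₁ * ρ * R ^ (k - 1)
            + (p.choose n) * (Real.sqrt n * (n.factorial * (B ^ (n - 1) * (K₁ * 2 ^ (k - 1)))))
              * R ^ (k - 1) := add_le_add h1 h2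
        _ = Kbig * R ^ (k - 1) := by rw [hKbigdef]; ring
    exact core R hR0 hRε hfinal
  · -- immersion
    intro x hx0 hxε
    have hxρ : ‖x‖ < ρ := by linarith [hερ, lt_of_lt_of_le hxε hερ]
    have hxcb : x ∈ closedBall (0 : EuclideanSpace ℝ (Fin n)) ρ :=
      mem_closedBall_zero_iff.mpr hxρ.le
    have hxU : x ∈ U := hρU hxcb
    have hxQW : (t, x) ∈ W := hQW (hQmem t ht.le x hxcb)
    have hx0W : ((0:ℝ), x) ∈ W := hUW x hxU
    have hd0 : DifferentiableAt ℝ (fun y => f (0, y)) x := (hslice 0 x hx0W).differentiableAt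
    have hdg : DifferentiableAt ℝ (fun y => f (t, y) - f (0, y)) x :=
      ((hslice t x hxQW).sub (hslice 0 x hx0W)).differentiableAt
    have hsum : fderiv ℝ (fun y => f (t, y)) x
        = fderiv ℝ (fun y => f (0, y)) x + fderiv ℝ (fun y => f (t, y) - f (0, y)) x := by
      have he : (fun y => f (t, y))
          = (fun y => f (0, y) + (f (t, y) - f (0, y))) := by
        funext y
        abel
      rw [he, fderiv_fun_add hd0 hdg]
    have key : ∀ u : EuclideanSpace ℝ (Fin n),
        fderiv ℝ (fun y => f (t, y)) x u = 0 → u = 0 := by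
      intro u hu
      by_contra hu0
      set w : EuclideanSpace ℝ (Fin n) := ‖u‖⁻¹ • u with hwdef
      have hw1 : ‖w‖ = 1 := norm_smul_inv_norm hu0
      have hLw : fderiv ℝ (fun y => f (t, y)) x w = 0 := by
        rw [hwdef, map_smul, hu, smul_zero]
      have hsplit : fderiv ℝ (fun y => f (0, y)) x w
          = -(fderiv ℝ (fun y => f (t, y) - f (0, y)) x w) := by
        have h := congrArg (fun L : EuclideanSpace ℝ (Fin n) →L[ℝ] EuclideanSpace ℝ (Fin p) => L w) hsum
        simp only [ContinuousLinearMap.add_apply] at h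
        rw [hLw] at h
        linear_combination (norm := abel) -h
      have hDgb := hDg t ht.le x hx0 hxε
      have hnb : ‖fderiv ℝ (fun y => f (0, y)) x w‖ ≤ K₁ * (2 * ‖x‖) ^ (k - 1) := by
        rw [hsplit, norm_neg]
        calc ‖fderiv ℝ (fun y => f (t, y) - f (0, y)) x w‖
            ≤ ‖fderiv ℝ (fun y => f (t, y) - f (0, y)) x‖ * ‖w‖ :=
              ContinuousLinearMap.le_opNorm _ _
          _ = ‖fderiv ℝ (fun y => f (t, y) - f (0, y)) x‖ := by rw [hw1, mul_one]
          _ ≤ K₁ * (2 * ‖x‖) ^ (k - 1) := hDgb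
      have hcomp : ∀ i, |((A₀ x x).mulVec w) i| ≤ K₁ * (2 * ‖x‖) ^ (k - 1) := by
        intro i
        rw [← hDf₀ x hxρ w i]
        have h := euclid_coord_le_norm (fderiv ℝ (fun y => f (0, y)) x w) i
        exact h.trans hnb
      have hminor := minorB x hxcb x hxcb w hw1 (K₁ * (2 * ‖x‖) ^ (k - 1)) (by positivity) hcomp
      have hpair : ‖((x, x) : EuclideanSpace ℝ (Fin n) × EuclideanSpace ℝ (Fin n))‖ = ‖x‖ := by
        rw [Prod.norm_def]
        simp
      have hloj := hLoj x hxU x hxU (by rw [hpair]; exact lt_of_lt_of_le hxε hεε₁)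
      rw [hpair] at hloj
      have hzero : ‖f (0, x) - f (0, x)‖ = 0 := by simp
      have hfinal : C * ‖x‖ ^ α ≤ Kbig * ‖x‖ ^ (k - 1) := by
        calc C * ‖x‖ ^ α
            ≤ ‖f (0, x) - f (0, x)‖ + minorAbsSum n p (A₀ x x) := hloj
          _ = minorAbsSum n p (A₀ x x) := by rw [hzero, zero_add]
          _ ≤ (p.choose n) * (Real.sqrt n * (n.factorial
                * (B ^ (n - 1) * (K₁ * (2 * ‖x‖) ^ (k - 1))))) := hminor
          _ ≤ Kbig * ‖x‖ ^ (k - 1) := by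
              rw [hKbigdef, mul_pow]
              have e1 : (p.choose n : ℝ) * (Real.sqrt n * (n.factorial
                  * (B ^ (n - 1) * (K₁ * (2 ^ (k - 1) * ‖x‖ ^ (k - 1))))))
                = ((p.choose n : ℝ) * (Real.sqrt n * (n.factorial
                  * (B ^ (n - 1) * (K₁ * 2 ^ (k - 1)))))) * ‖x‖ ^ (k - 1) := by
                ring
              rw [e1]
              have h2 : (0:ℝ) ≤ 2 * K₁ * ρ * ‖x‖ ^ (k - 1) := by positivity
              nlinarith [h2]
      exact core ‖x‖ hx0 hxε hfinal
    intro u₁ u₂ h12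
    have h3 : fderiv ℝ (fun y => f (t, y)) x (u₁ - u₂) = 0 := by
      rw [map_sub, h12, sub_self]
    exact sub_eq_zero.mp (key _ h3)
end

section
/- Let X ⊆ ℝᵖ be a set and x₀ ∈ X. Suppose there exist an open neighborhood U of 0 in ℝⁿ, a real analytic map f : U → ℝᵖ with f(0) = x₀, an open neighborhood V of x₀ in ℝᵖ with f(U) = X ∩ V, and constants c, C > 0 with c‖x − x'‖ ≤ ‖f(x) − f(x')‖ ≤ C‖x − x'‖ for all x, x' ∈ U (f is bi-Lipschitz onto its image). Then there exist open neighborhoods U' ⊆ U of 0 and V' ⊆ V of x₀ such that Df(x) is injective for every x ∈ U' and f restricted to U' is a homeomorphism onto X ∩ V'; in particular, X is a smooth (indeed analytic) n-dimensional submanifold of ℝᵖ near x₀. -/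
open Metric Set

/-- let `X ⊆ ℝᵖ`, `x₀ ∈ X`, and suppose `X` is locally parametrized at `x₀`
as the image `f(U) = X ∩ V` of a real analytic map `f` which is bi-Lipschitz onto its
image.  Then there are open neighborhoods `U' ⊆ U` of `0` and `V' ⊆ V` of `x₀` such that
`Df(x)` is injective for every `x ∈ U'` and `f` restricted to `U'` is a homeomorphism
(an embedding) onto `X ∩ V'`; in particular `X` is a smooth `n`-dimensional submanifold
of `ℝᵖ` near `x₀`. -/
theorem lipschitz_regular_parametrization_smooth {n p : ℕ}
    (X : Set (EuclideanSpace ℝ (Fin p))) (x₀ : EuclideanSpace ℝ (Fin p)) (hx₀ : x₀ ∈ X)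
    (U : Set (EuclideanSpace ℝ (Fin n))) (hUo : IsOpen U)
    (hU0 : (0 : EuclideanSpace ℝ (Fin n)) ∈ U)
    (f : EuclideanSpace ℝ (Fin n) → EuclideanSpace ℝ (Fin p))
    (hf : AnalyticOnNhd ℝ f U) (hf0 : f 0 = x₀)
    (V : Set (EuclideanSpace ℝ (Fin p))) (hVo : IsOpen V) (hV0 : x₀ ∈ V)
    (hfU : f '' U = X ∩ V)
    (c C : ℝ) (hc : 0 < c) (hC : 0 < C)
    (hbl : ∀ x ∈ U, ∀ x' ∈ U,
      c * ‖x - x'‖ ≤ ‖f x - f x'‖ ∧ ‖f x - f x'‖ ≤ C * ‖x - x'‖) :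
    ∃ U' : Set (EuclideanSpace ℝ (Fin n)), ∃ V' : Set (EuclideanSpace ℝ (Fin p)),
      IsOpen U' ∧ (0 : EuclideanSpace ℝ (Fin n)) ∈ U' ∧ U' ⊆ U ∧
      IsOpen V' ∧ x₀ ∈ V' ∧ V' ⊆ V ∧
      (∀ x ∈ U', Function.Injective (fderiv ℝ f x)) ∧
      f '' U' = X ∩ V' ∧
      Topology.IsEmbedding (U'.restrict f) := by
  refine ⟨U, V, hUo, hU0, le_refl U, hVo, hV0, le_refl V, ?_, hfU, ?_⟩
  · -- derivative injectivity
    intro x hx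
    have hd : HasFDerivAt f (fderiv ℝ f x) x := ((hf x hx).differentiableAt).hasFDerivAt
    have key : ∀ v, fderiv ℝ f x v = 0 → v = 0 := by
      intro v hv
      by_contra hv0
      have hvn : 0 < ‖v‖ := norm_pos_iff.mpr hv0
      have hlo := hd.isLittleO.def (show (0:ℝ) < c/2 by linarith)
      have hU' : ∀ᶠ y in nhds x, y ∈ U := hUo.mem_nhds hx
      have hcomb := hlo.and hU'
      rw [Metric.eventually_nhds_iff] at hcomb
      obtain ⟨δ, hδ, hball⟩ := hcomb
      set t : ℝ := δ / (2 * (‖v‖ + 1)) with ht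
      have ht0 : 0 < t := by positivity
      set y := x + t • v with hy
      have hdist : dist y x < δ := by
        rw [dist_eq_norm]
        have : y - x = t • v := by simp [hy]
        rw [this, norm_smul, Real.norm_eq_abs, abs_of_pos ht0]
        rw [ht, div_mul_eq_mul_div, div_lt_iff₀ (by positivity)]
        nlinarith
      obtain ⟨hbnd, hyU⟩ := hball hdist
      have hyx : y - x = t • v := by simp [hy]
      have hDer : fderiv ℝ f x (y - x) = 0 := by
        rw [hyx, map_smul, hv, smul_zero]
      rw [hDer, sub_zero, hyx, norm_smul, Real.norm_eq_abs, abs_of_pos ht0] at hbnd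
      have hlow := (hbl y hyU x hx).1
      rw [hyx, norm_smul, Real.norm_eq_abs, abs_of_pos ht0] at hlow
      nlinarith [mul_pos ht0 hvn]
    intro v w hvw
    have : fderiv ℝ f x (v - w) = 0 := by rw [map_sub, hvw, sub_self]
    exact sub_eq_zero.mp (key _ this)
  · -- embedding
    have hlip : LipschitzWith (Real.toNNReal C) (U.restrict f) := by
      apply LipschitzWith.of_dist_le_mul
      intro a b
      rw [Subtype.dist_eq, dist_eq_norm, dist_eq_norm]
      rw [Real.coe_toNNReal C hC.le]
      exact (hbl a a.2 b b.2).2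
    have hanti : AntilipschitzWith (Real.toNNReal c⁻¹) (U.restrict f) := by
      apply AntilipschitzWith.of_le_mul_dist
      intro a b
      rw [Subtype.dist_eq, dist_eq_norm, dist_eq_norm]
      rw [Real.coe_toNNReal _ (inv_nonneg.mpr hc.le)]
      rw [le_inv_mul_iff₀ hc]
      exact (hbl a a.2 b b.2).1
    exact (hanti.isUniformEmbedding hlip.uniformContinuous).isEmbedding
end
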